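/- (Main Lemma, combinatorial form.) Let 𝒟 be an open dense subset of the tree Hechler poset ℍ and let S := {stem(T') : T' ∈ 𝒟}. Let T ∈ ℍ, and let A ⊆ ℕ be such that for every finite sequence t ∈ ℕ^{<ω} and every ordinal α, if the set B := {z ∈ ℕ : t⌢z is β-S-reachable for some β < α} is infinite, then B \ A is infinite. Then there exists T' ∈ 𝒟 with T' ≤_A T, i.e. T' ⊆ T and stem(T') extends stem(T) with no new value in A. -/

import Mathlib

namespace GCH

/-! ### Turing reducibility -/

/-- `RecursiveIn O f` : the partial function `f : ℕ →. ℕ` is partial recursive relative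
to the oracle `O`.  This is the relativization of `Nat.Partrec`. -/
inductive RecursiveIn (O : ℕ →. ℕ) : (ℕ →. ℕ) → Prop
  | oracle : RecursiveIn O O
  | zero : RecursiveIn O (pure 0)
  | succ : RecursiveIn O ↑Nat.succ
  | left : RecursiveIn O ↑fun n : ℕ => n.unpair.1
  | right : RecursiveIn O ↑fun n : ℕ => n.unpair.2
  | pair {f g} : RecursiveIn O f → RecursiveIn O g →
      RecursiveIn O fun n => Nat.pair <$> f n <*> g n
  | comp {f g} : RecursiveIn O f → RecursiveIn O g →
      RecursiveIn O fun n => g n >>= f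
  | prec {f g} : RecursiveIn O f → RecursiveIn O g →
      RecursiveIn O (Nat.unpaired fun a n =>
        n.rec (f a) fun y IH => do let i ← IH; g (Nat.pair a (Nat.pair y i)))
  | rfind {f} : RecursiveIn O f →
      RecursiveIn O fun a => Nat.rfind fun n => (fun m => m = 0) <$> f (Nat.pair a n)

/-- Turing reducibility `f ≤_T g` for total functions `ℕ → ℕ`. -/
def TuringReducible (f g : ℕ → ℕ) : Prop :=
  RecursiveIn (g : ℕ →. ℕ) (f : ℕ →. ℕ)

/-- The Turing join `a ⊕ b` : `(a ⊕ b)(2n) = a(n)`, `(a ⊕ b)(2n+1) = b(n)`. -/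
def join (a b : ℕ → ℕ) : ℕ → ℕ := fun n =>
  if n % 2 = 0 then a (n / 2) else b (n / 2)

open Classical in
/-- The characteristic function of `A ⊆ ℕ`. -/
noncomputable def chi (A : Set ℕ) : ℕ → ℕ := fun n => if n ∈ A then 1 else 0

/-! ### The tree Hechler poset `ℍ` -/

/-- A condition in the tree Hechler poset `ℍ` : a nonempty tree `T ⊆ ℕ^{<ω}` closed under
initial segments, having a stem (the longest node comparable with every node of the tree),
such that every node extending the stem has cofinitely many immediate successors.
The order is inclusion of trees: `T' ≤ T` iff `T'.tree ⊆ T.tree`. -/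
structure Hechler where
  /-- the underlying set of finite sequences -/
  tree : Set (List ℕ)
  nonempty : tree.Nonempty
  /-- closed under initial segments -/
  closed : ∀ ⦃s t : List ℕ⦄, s <+: t → t ∈ tree → s ∈ tree
  /-- the stem -/
  stem : List ℕ
  stem_mem : stem ∈ tree
  /-- the stem is comparable with every node of the tree -/
  stem_comparable : ∀ t ∈ tree, stem <+: t ∨ t <+: stem
  /-- the stem is the longest node comparable with every node of the tree -/
  stem_longest : ∀ s ∈ tree, (∀ t ∈ tree, s <+: t ∨ t <+: s) → s.length ≤ stem.length
  /-- every node extending the stem has cofinitely many immediate successors -/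
  succ_cofinite : ∀ t ∈ tree, stem <+: t → {z : ℕ | t ++ [z] ∉ tree}.Finite

/-- `D ⊆ ℍ` is dense: every condition has a subset in `D`. -/
def HDense (D : Set Hechler) : Prop := ∀ T : Hechler, ∃ T' ∈ D, T'.tree ⊆ T.tree

/-- `D ⊆ ℍ` is open: any condition included in a member of `D` is in `D`. -/
def HOpen (D : Set Hechler) : Prop :=
  ∀ T T' : Hechler, T'.tree ⊆ T.tree → T ∈ D → T' ∈ D

/-- The set of stems of members of `D`. -/
def stems (D : Set Hechler) : Set (List ℕ) := {s | ∃ T ∈ D, T.stem = s}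

open Classical in
/-- `ReachAt S α t` : `t` is `α`-`S`-reachable.  `t` is `0`-`S`-reachable iff `t ∈ S`;
for `α > 0`, `t` is `α`-`S`-reachable iff infinitely many `z` are such that `t ⌢ z` is
`β`-`S`-reachable for some `β < α`. -/
noncomputable def ReachAt (S : Set (List ℕ)) (α : Ordinal.{0}) (t : List ℕ) : Prop :=
  if α = 0 then t ∈ S
  else {z : ℕ | ∃ β : Ordinal.{0}, ∃ _ : β < α, ReachAt S β (t ++ [z])}.Infinite
termination_by α

/-- `t` is `S`-reachable iff it is `α`-`S`-reachable for some ordinal `α`. -/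
def SReachable (S : Set (List ℕ)) (t : List ℕ) : Prop := ∃ α : Ordinal.{0}, ReachAt S α t

/-- `t' ⊒_A t` : `t'` extends `t` and takes no new value in `A`. -/
def ExtOutside (A : Set ℕ) (t t' : List ℕ) : Prop :=
  t <+: t' ∧ ∀ (k : ℕ) (h : k < t'.length), t.length ≤ k → t'.get ⟨k, h⟩ ∉ A

/-- The union of the stems of the `T i` is the total function `g : ℕ → ℕ`:
each stem is an initial segment of `g` and the stem lengths are unbounded. -/
def stemsUnion (T : ℕ → Hechler) (g : ℕ → ℕ) : Prop :=
  (∀ (i k : ℕ) (h : k < (T i).stem.length), (T i).stem.get ⟨k, h⟩ = g k) ∧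
    ∀ n : ℕ, ∃ i, n < (T i).stem.length

open Classical in
/-- The real `A`-encoded by `g` (relative to the fixed function `θ`):
its `i`-th value is `η_A(g(n_i))` where `n_0 < n_1 < ⋯` enumerates `{n | g n ∈ A}`
and `η_A = θ ∘ e_A⁻¹` with `e_A` the increasing enumeration of `A`. -/
noncomputable def encodedReal (θ : ℕ → ℕ) (A : Set ℕ) (g : ℕ → ℕ) : ℕ → ℕ :=
  fun i => θ (Nat.count (· ∈ A) (g (Nat.nth (fun n => g n ∈ A) i)))


/-! ### Auxiliary lemmas for the main lemma -/

lemma reachAt_zero (S : Set (List ℕ)) (t : List ℕ) : ReachAt S 0 t ↔ t ∈ S := by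
  rw [ReachAt]; simp

lemma reachAt_pos (S : Set (List ℕ)) {α : Ordinal.{0}} (hα : α ≠ 0) (t : List ℕ) :
    ReachAt S α t ↔
      {z : ℕ | ∃ β : Ordinal.{0}, ∃ _ : β < α, ReachAt S β (t ++ [z])}.Infinite := by
  rw [ReachAt]; simp [hα]

lemma sReachable_of_infinite {S : Set (List ℕ)} {t : List ℕ}
    (h : {z : ℕ | SReachable S (t ++ [z])}.Infinite) : SReachable S t := by
  classical
  set g : ℕ → Ordinal.{0} := fun z =>
    if hz : SReachable S (t ++ [z]) then hz.choose else 0 with hg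
  refine ⟨Ordinal.lsub g, ?_⟩
  have hne : Ordinal.lsub g ≠ 0 := by
    intro h0
    have h1 := Ordinal.lt_lsub g 0
    rw [h0] at h1
    exact absurd h1 (not_lt_of_ge zero_le)
  rw [reachAt_pos S hne]
  refine h.mono ?_
  intro z hz
  have hz' : SReachable S (t ++ [z]) := hz
  refine ⟨g z, Ordinal.lt_lsub g z, ?_⟩
  show ReachAt S (g z) (t ++ [z])
  simp only [hg]
  rw [dif_pos hz']
  exact hz'.choose_spec

lemma finite_reachable_succ {S : Set (List ℕ)} {t : List ℕ} (h : ¬ SReachable S t) :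
    {z : ℕ | SReachable S (t ++ [z])}.Finite := by
  by_contra hf
  exact h (sReachable_of_infinite hf)

lemma prefix_antisymm {l1 l2 : List ℕ} (h1 : l1 <+: l2) (h2 : l2 <+: l1) : l1 = l2 :=
  h1.eq_of_length (le_antisymm h1.length_le h2.length_le)

lemma prefix_snoc_self (t : List ℕ) (z : ℕ) : t <+: t ++ [z] := ⟨[z], rfl⟩

lemma prefix_snoc_cases {u s : List ℕ} {z : ℕ} (h : u <+: s ++ [z]) :
    u <+: s ∨ u = s ++ [z] := by
  rcases List.prefix_or_prefix_of_prefix h (prefix_snoc_self s z) with h1 | h1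
  · exact Or.inl h1
  · by_cases hl : u.length ≤ s.length
    · left
      have he : s = u := h1.eq_of_length (le_antisymm h1.length_le hl)
      rw [← he]
    · right
      refine h.eq_of_length ?_
      have h2 := h.length_le
      simp only [List.length_append, List.length_singleton] at h2 ⊢
      omega

lemma extOutside_refl (A : Set ℕ) (t : List ℕ) : ExtOutside A t t := by
  refine ⟨List.prefix_refl t, ?_⟩
  intro k h hk
  exact absurd h (by omega)

lemma extOutside_snoc {A : Set ℕ} {t s : List ℕ} {z : ℕ} (h : ExtOutside A t s) (hz : z ∉ A) :
    ExtOutside A t (s ++ [z]) := by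
  obtain ⟨hp, hout⟩ := h
  refine ⟨hp.trans (prefix_snoc_self s z), ?_⟩
  intro k hk htk
  rw [List.get_eq_getElem]
  by_cases hks : k < s.length
  · rw [List.getElem_append_left hks]
    have h2 := hout k hks htk
    rwa [List.get_eq_getElem] at h2
  · have hk' : k = s.length := by
      simp only [List.length_append, List.length_singleton] at hk
      omega
    subst hk'
    have : (s ++ [z])[s.length]'hk = z := by simp
    rw [this]
    exact hz

lemma hechler_infinite_succ (T : Hechler) {t : List ℕ} (ht : t ∈ T.tree)
    (hs : T.stem <+: t) : {z : ℕ | t ++ [z] ∈ T.tree}.Infinite := by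
  have hfin := T.succ_cofinite t ht hs
  have heq : {z : ℕ | t ++ [z] ∈ T.tree} = {z : ℕ | t ++ [z] ∉ T.tree}ᶜ := by
    ext z; simp
  rw [heq]
  exact hfin.infinite_compl

lemma false_of_comparable_long {tr : Set (List ℕ)} {st s : List ℕ}
    (hinf : {z : ℕ | st ++ [z] ∈ tr}.Infinite)
    (hlen : st.length < s.length)
    (hcomp : ∀ t ∈ tr, s <+: t ∨ t <+: s) : False := by
  have hsub : {z : ℕ | st ++ [z] ∈ tr} ⊆ {s[st.length]'hlen} := by
    intro z hz
    simp only [Set.mem_singleton_iff]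
    rcases hcomp _ hz with h1 | h1
    · have hlen2 : s.length = st.length + 1 := by
        have h2 := h1.length_le
        simp only [List.length_append, List.length_singleton] at h2
        omega
      have hse : s = st ++ [z] := h1.eq_of_length (by simp [hlen2])
      subst hse
      simp
    · have h2 : (st ++ [z])[st.length]'(by simp) = s[st.length]'hlen :=
        h1.getElem (by simp)
      simp only [List.getElem_concat_length] at h2
      exact h2
  exact hinf (Set.Finite.subset (Set.finite_singleton _) hsub)

lemma stem_prefix_of_subset {T T' : Hechler} (h : T'.tree ⊆ T.tree) :
    T.stem <+: T'.stem := by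
  have hmem : T'.stem ∈ T.tree := h T'.stem_mem
  rcases T.stem_comparable _ hmem with h1 | h1
  · exact h1
  · by_cases hl : T.stem.length ≤ T'.stem.length
    · have he : T'.stem = T.stem := h1.eq_of_length (le_antisymm h1.length_le hl)
      rw [he]
    · exfalso
      push_neg at hl
      have hinf : {z : ℕ | T'.stem ++ [z] ∈ T.tree}.Infinite :=
        (hechler_infinite_succ T' T'.stem_mem (List.prefix_refl _)).mono
          (fun z hz => h hz)
      exact false_of_comparable_long hinf hl T.stem_comparable

lemma stem_sReachable (D : Set Hechler) (hdense : HDense D) (T : Hechler) :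
    SReachable (stems D) T.stem := by
  classical
  by_contra hns
  set S : Set (List ℕ) := stems D with hS
  set Tt : Set (List ℕ) :=
    {s | s ∈ T.tree ∧ (s <+: T.stem ∨
      (T.stem <+: s ∧ ∀ u, T.stem <+: u → u <+: s → ¬ SReachable S u))} with hTt
  have hmemTt : ∀ s, s ∈ Tt ↔ s ∈ T.tree ∧ (s <+: T.stem ∨
      (T.stem <+: s ∧ ∀ u, T.stem <+: u → u <+: s → ¬ SReachable S u)) := by
    intro s; exact Iff.rfl
  have hnotreach : ∀ s ∈ Tt, T.stem <+: s → ¬ SReachable S s := by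
    intro s hs hst
    rcases ((hmemTt s).mp hs).2 with h1 | ⟨_, h2⟩
    · have he : s = T.stem := prefix_antisymm h1 hst
      exact he ▸ hns
    · exact h2 s hst (List.prefix_refl s)
  have hstemmem : T.stem ∈ Tt :=
    (hmemTt _).mpr ⟨T.stem_mem, Or.inl (List.prefix_refl _)⟩
  have hstemsucc : {z : ℕ | T.stem ++ [z] ∈ Tt}.Infinite := by
    have h2 := (hechler_infinite_succ T T.stem_mem (List.prefix_refl _)).diff
      (finite_reachable_succ hns)
    refine h2.mono ?_
    rintro z ⟨hz1, hz2⟩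
    refine (hmemTt _).mpr ⟨hz1, Or.inr ⟨prefix_snoc_self _ _, ?_⟩⟩
    intro u h1 h2'
    rcases prefix_snoc_cases h2' with h3 | h3
    · have he : u = T.stem := prefix_antisymm h3 h1
      exact he ▸ hns
    · exact h3 ▸ hz2
  have hsucc : ∀ t ∈ Tt, T.stem <+: t → {z : ℕ | t ++ [z] ∉ Tt}.Finite := by
    intro t ht hst
    have hnr : ¬ SReachable S t := hnotreach t ht hst
    have hcond : ∀ u, T.stem <+: u → u <+: t → ¬ SReachable S u := by
      intro u h1 h2
      rcases ((hmemTt t).mp ht).2 with h3 | ⟨_, h4⟩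
      · have he : t = T.stem := prefix_antisymm h3 hst
        have hu : u = T.stem := prefix_antisymm (he ▸ h2) h1
        exact hu ▸ hns
      · exact h4 u h1 h2
    have hsub : {z : ℕ | t ++ [z] ∉ Tt} ⊆
        {z : ℕ | t ++ [z] ∉ T.tree} ∪ {z : ℕ | SReachable S (t ++ [z])} := by
      intro z hz
      by_contra hcon
      simp only [Set.mem_union, Set.mem_setOf_eq] at hcon
      push_neg at hcon
      apply hz
      refine (hmemTt _).mpr ⟨hcon.1, Or.inr ⟨hst.trans (prefix_snoc_self t z), ?_⟩⟩
      intro u h1 h2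
      rcases prefix_snoc_cases h2 with h3 | h3
      · exact hcond u h1 h3
      · exact h3 ▸ hcon.2
    exact Set.Finite.subset
      ((T.succ_cofinite t ((hmemTt t).mp ht).1 hst).union (finite_reachable_succ hnr)) hsub
  let T2 : Hechler :=
    { tree := Tt
      nonempty := ⟨T.stem, hstemmem⟩
      closed := by
        intro a b hab hb
        obtain ⟨hb1, hb2⟩ := (hmemTt b).mp hb
        refine (hmemTt a).mpr ⟨T.closed hab hb1, ?_⟩
        rcases hb2 with h1 | ⟨h1, h2⟩
        · exact Or.inl (hab.trans h1)
        · rcases List.prefix_or_prefix_of_prefix hab h1 with h3 | h3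
          · exact Or.inl h3
          · exact Or.inr ⟨h3, fun u hu1 hu2 => h2 u hu1 (hu2.trans hab)⟩
      stem := T.stem
      stem_mem := hstemmem
      stem_comparable := by
        intro t ht
        rcases ((hmemTt t).mp ht).2 with h1 | ⟨h1, _⟩
        · exact Or.inr h1
        · exact Or.inl h1
      stem_longest := by
        intro s hs hcomp
        by_contra hl
        push_neg at hl
        exact false_of_comparable_long hstemsucc hl hcomp
      succ_cofinite := fun t ht hst => hsucc t ht hst }
  obtain ⟨T'', hT''D, hT''sub⟩ := hdense T2
  have hT2stem : T2.stem = T.stem := rfl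
  have hT2tree : T2.tree = Tt := rfl
  have hstem2 : T.stem <+: T''.stem := by
    have := stem_prefix_of_subset hT''sub
    rwa [hT2stem] at this
  have hT''mem : T''.stem ∈ Tt := by
    have := hT''sub T''.stem_mem
    rwa [hT2tree] at this
  have hnr := hnotreach _ hT''mem hstem2
  exact hnr ⟨0, (reachAt_zero S T''.stem).mpr ⟨T'', hT''D, rfl⟩⟩

/-- The intersection of two conditions, when the stem of the second lies in the first
tree and extends the stem of the first, is again a condition with the longer stem. -/
def interH (T T'' : Hechler) (h1 : T''.stem ∈ T.tree) (h2 : T.stem <+: T''.stem) :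
    Hechler where
  tree := T.tree ∩ T''.tree
  nonempty := ⟨T''.stem, h1, T''.stem_mem⟩
  closed := fun _ _ hst ht => ⟨T.closed hst ht.1, T''.closed hst ht.2⟩
  stem := T''.stem
  stem_mem := ⟨h1, T''.stem_mem⟩
  stem_comparable := fun t ht => T''.stem_comparable t ht.2
  stem_longest := by
    intro s hs hcomp
    by_contra hl
    push_neg at hl
    have hinf : {z : ℕ | T''.stem ++ [z] ∈ T.tree ∩ T''.tree}.Infinite := by
      have hf1 := T.succ_cofinite T''.stem h1 h2
      have hf2 := T''.succ_cofinite T''.stem T''.stem_mem (List.prefix_refl _)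
      have heq : {z : ℕ | T''.stem ++ [z] ∈ T.tree ∩ T''.tree} =
          ({z : ℕ | T''.stem ++ [z] ∉ T.tree} ∪ {z : ℕ | T''.stem ++ [z] ∉ T''.tree})ᶜ := by
        ext z
        simp only [Set.mem_setOf_eq, Set.mem_inter_iff, Set.mem_compl_iff, Set.mem_union]
        tauto
      rw [heq]
      exact (hf1.union hf2).infinite_compl
    exact false_of_comparable_long hinf hl hcomp
  succ_cofinite := by
    intro t ht hst
    have hf1 := T.succ_cofinite t ht.1 (h2.trans hst)
    have hf2 := T''.succ_cofinite t ht.2 hst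
    refine Set.Finite.subset (hf1.union hf2) ?_
    intro z hz
    by_contra hcon
    simp only [Set.mem_union, Set.mem_setOf_eq] at hcon
    push_neg at hcon
    exact hz ⟨hcon.1, hcon.2⟩

lemma walk (D : Set Hechler) (T : Hechler) (A : Set ℕ)
    (hstick : ∀ (t : List ℕ) (α : Ordinal.{0}),
      {z : ℕ | ∃ β : Ordinal.{0}, ∃ _ : β < α,
        ReachAt (stems D) β (t ++ [z])}.Infinite →
      ({z : ℕ | ∃ β : Ordinal.{0}, ∃ _ : β < α,
        ReachAt (stems D) β (t ++ [z])} \ A).Infinite) :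
    ∀ (α : Ordinal.{0}) (t : List ℕ), ReachAt (stems D) α t → t ∈ T.tree →
      T.stem <+: t → ExtOutside A T.stem t →
      ∃ t', t' ∈ T.tree ∧ t' ∈ stems D ∧ ExtOutside A T.stem t' := by
  intro α
  induction α using Ordinal.induction with
  | h α IH =>
    intro t hr ht hst hext
    by_cases hα : α = 0
    · subst hα
      rw [reachAt_zero] at hr
      exact ⟨t, ht, hr, hext⟩
    · rw [reachAt_pos _ hα] at hr
      have h2 := hstick t α hr
      have h3 := T.succ_cofinite t ht hst
      have h4 : ((({z : ℕ | ∃ β : Ordinal.{0}, ∃ _ : β < α,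
          ReachAt (stems D) β (t ++ [z])} \ A)) \ {z : ℕ | t ++ [z] ∉ T.tree}).Nonempty :=
        (h2.diff h3).nonempty
      obtain ⟨z, ⟨⟨β, hβ, hrz⟩, hzA⟩, hzT⟩ := h4
      simp only [Set.mem_setOf_eq, not_not] at hzT
      exact IH β hβ (t ++ [z]) hrz hzT (hst.trans (prefix_snoc_self t z))
        (extOutside_snoc hext hzA)

/-- **Main Lemma** (combinatorial form). -/
theorem main_lemma (D : Set Hechler) (hopen : HOpen D) (hdense : HDense D)
    (T : Hechler) (A : Set ℕ)
    (hstick : ∀ (t : List ℕ) (α : Ordinal.{0}),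
      {z : ℕ | ∃ β : Ordinal.{0}, ∃ _ : β < α,
        ReachAt (stems D) β (t ++ [z])}.Infinite →
      ({z : ℕ | ∃ β : Ordinal.{0}, ∃ _ : β < α,
        ReachAt (stems D) β (t ++ [z])} \ A).Infinite) :
    ∃ T' ∈ D, T'.tree ⊆ T.tree ∧ ExtOutside A T.stem T'.stem := by
  obtain ⟨α, hα⟩ := stem_sReachable D hdense T
  obtain ⟨t', ht'T, ht'S, ht'ext⟩ := walk D T A hstick α T.stem hα T.stem_mem
    (List.prefix_refl _) (extOutside_refl A T.stem)
  obtain ⟨T'', hT''D, hT''stem⟩ := ht'S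
  have hpre : T.stem <+: T''.stem := by rw [hT''stem]; exact ht'ext.1
  have hmem : T''.stem ∈ T.tree := by rw [hT''stem]; exact ht'T
  refine ⟨interH T T'' hmem hpre, ?_, fun x hx => hx.1, ?_⟩
  · exact hopen T'' _ (fun x hx => hx.2) hT''D
  · show ExtOutside A T.stem T''.stem
    rw [hT''stem]
    exact ht'ext

end GCH
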